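/- arXiv:2202.02407 — 2 statements merged into one kernel-verified Lean document; each statement's English description precedes it below -/
import Mathlib

section
/- For any θ ≠ 0 with |θ| ≥ z*, where z* maximizes f(z) = μ'(z)z² over ℝ, we have sup_{x ∈ [-1,1]} μ'(xθ)x² = f(z*)/θ², attained at x = z*/|θ| (and at x = -z*/|θ|). -/
noncomputable def μ (z : ℝ) : ℝ := 1 / (1 + Real.exp (-z))

noncomputable def f (z : ℝ) : ℝ := deriv μ z * z ^ 2

lemma deriv_mu (z : ℝ) : deriv μ z = Real.exp (-z) / (1 + Real.exp (-z)) ^ 2 := by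
  have hne : (1 : ℝ) + Real.exp (-z) ≠ 0 := by positivity
  have h1 : HasDerivAt (fun z : ℝ => -z) (-1) z := (hasDerivAt_id z).neg
  have h2 : HasDerivAt (fun z : ℝ => 1 + Real.exp (-z)) (Real.exp (-z) * (-1)) z :=
    (h1.exp).const_add 1
  have h3 : HasDerivAt (fun z : ℝ => (1 + Real.exp (-z))⁻¹)
      (-(Real.exp (-z) * (-1)) / (1 + Real.exp (-z)) ^ 2) z := h2.inv hne
  have h4 : HasDerivAt μ (Real.exp (-z) / (1 + Real.exp (-z)) ^ 2) z := by
    have : μ = fun z : ℝ => (1 + Real.exp (-z))⁻¹ := by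
      funext w; simp [μ, one_div]
    rw [this]
    convert h3 using 1; ring
  exact h4.deriv

lemma deriv_mu_even (z : ℝ) : deriv μ (-z) = deriv μ z := by
  rw [deriv_mu, deriv_mu, neg_neg, Real.exp_neg]
  have h : Real.exp z ≠ 0 := Real.exp_ne_zero z
  field_simp
  ring

lemma f_even (z : ℝ) : f (-z) = f z := by
  simp [f, deriv_mu_even]

lemma key (θ : ℝ) (hθ : θ ≠ 0) (x : ℝ) :
    deriv μ (x * θ) * x ^ 2 = f (x * θ) / θ ^ 2 := by
  have h : θ ^ 2 ≠ 0 := pow_ne_zero 2 hθ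
  field_simp [f]
  unfold f
  ring

theorem one_dim_H_optimal_design_large_theta (θ zstar : ℝ) (hθ : θ ≠ 0)
    (hzpos : 0 < zstar) (hmax : ∀ z : ℝ, f z ≤ f zstar) (hge : zstar ≤ |θ|) :
    (∀ x ∈ Set.Icc (-1 : ℝ) 1, deriv μ (x * θ) * x ^ 2 ≤ f zstar / θ ^ 2) ∧
    deriv μ ((zstar / |θ|) * θ) * (zstar / |θ|) ^ 2 = f zstar / θ ^ 2 ∧
    deriv μ ((-(zstar / |θ|)) * θ) * (-(zstar / |θ|)) ^ 2 = f zstar / θ ^ 2 := by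
  have hθ2 : (0:ℝ) < θ ^ 2 := by positivity
  have habs : |θ| ≠ 0 := abs_ne_zero.mpr hθ
  have hfc : ∀ c : ℝ, c * θ = zstar ∨ c * θ = -zstar → f (c * θ) = f zstar := by
    rintro c (h | h)
    · rw [h]
    · rw [h, f_even]
  have hsign : (zstar / |θ|) * θ = zstar ∨ (zstar / |θ|) * θ = -zstar := by
    rcases abs_choice θ with h | h
    · left; rw [← h]; field_simp; simp
    · right; rw [h, div_neg, neg_mul, div_mul_cancel₀ _ hθ]
  refine ⟨fun x _ => ?_, ?_, ?_⟩
  · rw [key θ hθ x]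
    gcongr
    exact hmax _
  · rw [key θ hθ, hfc _ hsign]
  · rw [key θ hθ]
    have : (-(zstar / |θ|)) * θ = -((zstar / |θ|) * θ) := by ring
    rw [this, f_even, hfc _ hsign]
end

section
/- Let X ⊂ ℝ^d be a finite set of vectors, θ ∈ ℝ^d, and for a probability distribution λ on X define H_λ(θ) = Σ_{x∈X} λ(x) μ'(xᵀθ) x xᵀ. If H_λ(θ) is invertible, then min over probability distributions λ on X of max_{x∈X} μ'(xᵀθ)² ‖x‖²_{H_λ(θ)^{-1}} is at most d/4. -/
open Matrix

/-- `H_λ(θ) = ∑_{x ∈ X} λ(x) μ'(xᵀθ) x xᵀ`. -/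
noncomputable def Hmat {d : ℕ} (X : Finset (Fin d → ℝ)) (θ : Fin d → ℝ)
    (w : (Fin d → ℝ) → ℝ) : Matrix (Fin d) (Fin d) ℝ :=
  ∑ x ∈ X, (w x * deriv μ (x ⬝ᵥ θ)) • Matrix.vecMulVec x x

lemma hasDerivAt_mu (z : ℝ) :
    HasDerivAt μ (Real.exp (-z) / (1 + Real.exp (-z)) ^ 2) z := by
  have hpos : (0:ℝ) < 1 + Real.exp (-z) := by positivity
  have h1 : HasDerivAt (fun t : ℝ => 1 + Real.exp (-t)) (-Real.exp (-z)) z := by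
    simpa using ((Real.hasDerivAt_exp (-z)).comp z ((hasDerivAt_id z).neg)).const_add 1
  have h2 := h1.inv hpos.ne'
  have : μ = fun t : ℝ => (1 + Real.exp (-t))⁻¹ := by
    funext t; simp [μ, one_div]
  rw [this]
  refine h2.congr_deriv ?_
  field_simp

lemma deriv_mu_pos (z : ℝ) : 0 < deriv μ z := by
  rw [(hasDerivAt_mu z).deriv]; positivity

lemma deriv_mu_le (z : ℝ) : deriv μ z ≤ 1 / 4 := by
  rw [(hasDerivAt_mu z).deriv, div_le_iff₀ (by positivity)]
  nlinarith [sq_nonneg (1 - Real.exp (-z)), Real.exp_pos (-z)]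

lemma psd_vecMulVec {n : Type*} [Fintype n] (v : n → ℝ) :
    (Matrix.vecMulVec v v).PosSemidef := by
  refine Matrix.PosSemidef.of_dotProduct_mulVec_nonneg ?_ ?_
  · ext i j
    simp [Matrix.conjTranspose_apply, Matrix.vecMulVec_apply, mul_comm]
  · intro y
    have : Matrix.vecMulVec v v *ᵥ y = (v ⬝ᵥ y) • v := by
      ext i
      simp [Matrix.mulVec, Matrix.vecMulVec_apply, dotProduct, Finset.mul_sum,
        mul_comm, mul_left_comm]
    rw [this]
    simp only [star_trivial, dotProduct_smul, smul_eq_mul]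
    rw [dotProduct_comm]
    exact mul_self_nonneg _

lemma psd_smul {n : Type*} [Fintype n] {M : Matrix n n ℝ} (hM : M.PosSemidef)
    {c : ℝ} (hc : 0 ≤ c) : (c • M).PosSemidef := by
  refine Matrix.PosSemidef.of_dotProduct_mulVec_nonneg ?_ ?_
  · show (c • M)ᴴ = c • M
    rw [Matrix.conjTranspose_smul, star_trivial, hM.1.eq]
  · intro y
    rw [Matrix.smul_mulVec, dotProduct_smul, smul_eq_mul]
    exact mul_nonneg hc (hM.dotProduct_mulVec_nonneg y)

lemma psd_det_nonneg {n : Type*} [Fintype n] [DecidableEq n] {M : Matrix n n ℝ}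
    (hM : M.PosSemidef) : 0 ≤ M.det := by
  exact hM.det_nonneg

lemma det_add_smul_vecMulVec {n : Type*} [Fintype n] [DecidableEq n] {H : Matrix n n ℝ}
    (hH : IsUnit H.det) (r : ℝ) (v : n → ℝ) :
    (H + r • Matrix.vecMulVec v v).det = H.det * (1 + r * (v ⬝ᵥ H⁻¹ *ᵥ v)) := by
  have h1 : r • Matrix.vecMulVec v v = Matrix.replicateCol Unit (r • v) * Matrix.replicateRow Unit v := by
    rw [← Matrix.vecMulVec_eq Unit]
    ext i j
    simp [Matrix.vecMulVec_apply]
    ring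
  rw [h1, Matrix.det_add_replicateCol_mul_replicateRow hH]
  simp only [Matrix.det_unique]
  congr 1
  rw [Matrix.mul_assoc, ← Matrix.replicateCol_mulVec, Matrix.add_apply, Matrix.one_apply_eq,
    Matrix.replicateRow_mul_replicateCol_apply, Matrix.mulVec_smul, dotProduct_smul, smul_eq_mul]

open Filter Set Topology in
lemma slope_bound {d : ℕ} (hd : 1 ≤ d) {a : ℝ}
    (h : ∀ t ∈ Set.Ioo (0:ℝ) 1, (1 - t) ^ (d - 1) * ((1 - t) + t * a) ≤ 1) :
    a ≤ d := by
  set g : ℝ → ℝ := fun t => (1 - t) ^ (d - 1) * ((1 - t) + t * a) with hg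
  have hg0 : g 0 = 1 := by simp [hg]
  have hderiv : HasDerivAt g (a - d) 0 := by
    have hf : HasDerivAt (fun t : ℝ => 1 - t) (-1) 0 := by
      simpa using (hasDerivAt_id (0:ℝ)).const_sub 1
    have h1 : HasDerivAt (fun t : ℝ => (1 - t) ^ (d - 1)) (-((d:ℝ) - 1)) 0 := by
      have := hf.pow (d - 1)
      refine this.congr_deriv ?_
      have : ((1:ℝ) - 0) ^ (d - 1 - 1) = 1 := by simp
      rw [this]
      have hcast : ((d - 1 : ℕ) : ℝ) = (d:ℝ) - 1 := by
        have := Nat.cast_sub hd (R := ℝ); simpa using this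
      rw [hcast]; ring
    have h2 : HasDerivAt (fun t : ℝ => (1 - t) + t * a) (a - 1) 0 := by
      have := hf.add ((hasDerivAt_id (0:ℝ)).mul_const a)
      refine this.congr_deriv ?_
      ring
    have := h1.mul h2
    refine this.congr_deriv ?_
    simp
  have h2 : Tendsto (slope g 0) (𝓝[>] 0) (𝓝 (a - d)) :=
    (hasDerivAt_iff_tendsto_slope.mp hderiv).mono_left
      (nhdsWithin_mono 0 (fun x hx => ne_of_gt hx))
  have hle : a - d ≤ 0 := by
    refine le_of_tendsto h2 ?_
    filter_upwards [Ioo_mem_nhdsGT (by norm_num : (0:ℝ) < 1)] with t ht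
    have hgt := h t ht
    have : slope g 0 t = (g t - 1) / t := by
      rw [slope_def_field]; rw [hg0]; ring_nf
    rw [this]
    exact div_nonpos_of_nonpos_of_nonneg (sub_nonpos.2 hgt) ht.1.le
  linarith

noncomputable def Mgen {d : ℕ} {ι : Type*} [Fintype ι] (v : ι → (Fin d → ℝ))
    (c : ι → ℝ) (p : ι → ℝ) : Matrix (Fin d) (Fin d) ℝ :=
  ∑ i, (p i * c i) • Matrix.vecMulVec (v i) (v i)

set_option maxHeartbeats 1000000 in
theorem kw_aux {d : ℕ} (hd : 1 ≤ d) {ι : Type*} [Fintype ι] [DecidableEq ι]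
    (v : ι → (Fin d → ℝ)) (c : ι → ℝ) (hc : ∀ i, 0 < c i)
    (p0 : ι → ℝ) (hp0 : p0 ∈ stdSimplex ℝ ι) (hdet0 : IsUnit (Mgen v c p0).det) :
    ∃ p ∈ stdSimplex ℝ ι, IsUnit (Mgen v c p).det ∧
      ∀ i, c i * (v i ⬝ᵥ (Mgen v c p)⁻¹ *ᵥ v i) ≤ d := by
  classical
  have hpsd : ∀ p : ι → ℝ, (∀ i, 0 ≤ p i) → (Mgen v c p).PosSemidef := by
    intro p hp
    rw [Mgen]
    apply Finset.sum_induction _ Matrix.PosSemidef (fun a b ha hb => ha.add hb)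
      Matrix.PosSemidef.zero
    intro i _
    exact psd_smul (psd_vecMulVec _) (mul_nonneg (hp i) (hc i).le)
  have hcont : ContinuousOn (fun p : ι → ℝ => (Mgen v c p).det) (stdSimplex ℝ ι) := by
    apply Continuous.continuousOn
    apply Continuous.matrix_det
    exact continuous_finset_sum _ fun i _ =>
      ((continuous_apply i).mul continuous_const).smul continuous_const
  obtain ⟨p, hpmem, hpmax⟩ := (isCompact_stdSimplex ℝ ι).exists_isMaxOn ⟨p0, hp0⟩ hcont
  have hdet0pos : 0 < (Mgen v c p0).det :=
    lt_of_le_of_ne (psd_det_nonneg (hpsd p0 hp0.1)) hdet0.ne_zero.symm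
  have hdetp : 0 < (Mgen v c p).det := lt_of_lt_of_le hdet0pos (hpmax hp0)
  have hunit : IsUnit (Mgen v c p).det := hdetp.ne'.isUnit
  refine ⟨p, hpmem, hunit, fun i => ?_⟩
  set q := v i ⬝ᵥ (Mgen v c p)⁻¹ *ᵥ v i with hq
  apply slope_bound hd
  intro t ht
  set pt : ι → ℝ := fun j => (1 - t) * p j + t * (if j = i then 1 else 0) with hptdef
  have h1t : (0:ℝ) < 1 - t := by linarith [ht.2]
  have hptmem : pt ∈ stdSimplex ℝ ι := by
    constructor
    · intro j
      have h01 : (0:ℝ) ≤ (if j = i then (1:ℝ) else 0) := by split <;> norm_num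
      exact add_nonneg (mul_nonneg h1t.le (hpmem.1 j)) (mul_nonneg ht.1.le h01)
    · rw [Finset.sum_add_distrib, ← Finset.mul_sum, ← Finset.mul_sum, hpmem.2,
        Finset.sum_ite_eq' Finset.univ i (fun _ => (1:ℝ))]
      simp
  have hMpt : Mgen v c pt = (1 - t) • Mgen v c p
      + (t * c i) • Matrix.vecMulVec (v i) (v i) := by
    have e1 : ∀ j : ι, (pt j * c j) • Matrix.vecMulVec (v j) (v j)
        = ((1 - t) * (p j * c j)) • Matrix.vecMulVec (v j) (v j)
          + ((t * (if j = i then 1 else 0)) * c j) • Matrix.vecMulVec (v j) (v j) := by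
      intro j
      rw [← add_smul]
      congr 1
      simp only [hptdef]
      ring
    have e2 : ∀ j : ι, ((t * (if j = i then 1 else 0)) * c j) • Matrix.vecMulVec (v j) (v j)
        = if j = i then (t * c i) • Matrix.vecMulVec (v i) (v i) else 0 := by
      intro j
      by_cases h : j = i <;> simp [h]
    calc Mgen v c pt
        = ∑ j, (((1 - t) * (p j * c j)) • Matrix.vecMulVec (v j) (v j)
          + ((t * (if j = i then 1 else 0)) * c j) • Matrix.vecMulVec (v j) (v j)) :=
          Finset.sum_congr rfl (fun j _ => e1 j)
      _ = (∑ j, ((1 - t) * (p j * c j)) • Matrix.vecMulVec (v j) (v j))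
          + ∑ j, ((t * (if j = i then 1 else 0)) * c j) • Matrix.vecMulVec (v j) (v j) :=
          Finset.sum_add_distrib
      _ = (1 - t) • Mgen v c p + (t * c i) • Matrix.vecMulVec (v i) (v i) := by
          congr 1
          · rw [Mgen, Finset.smul_sum]
            exact Finset.sum_congr rfl (fun j _ => (mul_smul _ _ _))
          · rw [Finset.sum_congr rfl (fun j _ => e2 j),
              Finset.sum_ite_eq' Finset.univ i]
            simp
  set r := t * c i / (1 - t) with hr
  have hfact : (1 - t) • Mgen v c p + (t * c i) • Matrix.vecMulVec (v i) (v i)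
      = (1 - t) • (Mgen v c p + r • Matrix.vecMulVec (v i) (v i)) := by
    rw [smul_add, smul_smul]
    congr 2
    rw [hr]
    field_simp
  have hdet : (Mgen v c pt).det
      = (Mgen v c p).det * ((1 - t) ^ (d - 1) * ((1 - t) + t * (c i * q))) := by
    rw [hMpt, hfact, Matrix.det_smul, det_add_smul_vecMulVec hunit, Fintype.card_fin]
    have hd1 : (1 - t) ^ d = (1 - t) ^ (d - 1) * (1 - t) := by
      conv_lhs => rw [← Nat.sub_add_cancel hd]
      rw [pow_succ]
    rw [hd1, hr, ← hq]
    field_simp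
  have hle : (Mgen v c pt).det ≤ (Mgen v c p).det := hpmax hptmem
  rw [hdet] at hle
  nlinarith [hdetp]

theorem H_optimal_design_le_d_div_four (d : ℕ) (X : Finset (Fin d → ℝ))
    (θ : Fin d → ℝ)
    (hinv : ∃ w : (Fin d → ℝ) → ℝ, (∀ x ∈ X, 0 ≤ w x) ∧ (∑ x ∈ X, w x) = 1 ∧
      IsUnit (Hmat X θ w).det) :
    ∃ w : (Fin d → ℝ) → ℝ, (∀ x ∈ X, 0 ≤ w x) ∧ (∑ x ∈ X, w x) = 1 ∧
      IsUnit (Hmat X θ w).det ∧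
      ∀ x ∈ X, (deriv μ (x ⬝ᵥ θ)) ^ 2 * (x ⬝ᵥ ((Hmat X θ w)⁻¹ *ᵥ x)) ≤ d / 4 := by
  classical
  obtain ⟨w0, hw0nn, hw0sum, hw0det⟩ := hinv
  rcases Nat.eq_zero_or_pos d with hd | hd
  · subst hd
    refine ⟨w0, hw0nn, hw0sum, hw0det, fun x _ => ?_⟩
    simp [dotProduct]
  · set vv : ↥X → (Fin d → ℝ) := fun x => (x : Fin d → ℝ) with hvv
    set cc : ↥X → ℝ := fun x => deriv μ ((x : Fin d → ℝ) ⬝ᵥ θ) with hcc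
    have hccpos : ∀ x, 0 < cc x := fun x => deriv_mu_pos _
    have key : ∀ w : (Fin d → ℝ) → ℝ,
        Mgen vv cc (fun x : ↥X => w x) = Hmat X θ w := by
      intro w
      rw [Mgen, Hmat, Finset.univ_eq_attach]
      exact Finset.sum_attach X
        (fun x => (w x * deriv μ (x ⬝ᵥ θ)) • Matrix.vecMulVec x x)
    have hp0 : (fun x : ↥X => w0 x) ∈ stdSimplex ℝ ↥X := by
      constructor
      · exact fun x => hw0nn x x.2
      · rw [Finset.univ_eq_attach]
        rw [Finset.sum_attach X w0]
        exact hw0sum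
    obtain ⟨p, hpmem, hunit, hbound⟩ :=
      kw_aux hd vv cc hccpos _ hp0 (by rw [key]; exact hw0det)
    set w : (Fin d → ℝ) → ℝ := fun x => if h : x ∈ X then p ⟨x, h⟩ else 0 with hw
    have hwp : (fun x : ↥X => w x) = p := by
      funext x
      simp [hw]
    have hHw : Hmat X θ w = Mgen vv cc p := by
      rw [← key w, hwp]
    refine ⟨w, ?_, ?_, ?_, ?_⟩
    · intro x hx
      rw [hw]
      simp only [dif_pos hx]
      exact hpmem.1 _
    · rw [← Finset.sum_attach X w]
      have : ∀ x ∈ X.attach, w x.1 = p x := fun x _ => congrFun hwp x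
      rw [Finset.sum_congr rfl this, ← Finset.univ_eq_attach]
      exact hpmem.2
    · rw [hHw]; exact hunit
    · intro x hx
      rw [hHw]
      have hb := hbound ⟨x, hx⟩
      have hc0 : 0 < deriv μ (x ⬝ᵥ θ) := deriv_mu_pos _
      have hc4 : deriv μ (x ⬝ᵥ θ) ≤ 1 / 4 := deriv_mu_le _
      have hdn : (0:ℝ) ≤ d := Nat.cast_nonneg d
      have h1 : deriv μ (x ⬝ᵥ θ) * (deriv μ (x ⬝ᵥ θ) * (x ⬝ᵥ (Mgen vv cc p)⁻¹ *ᵥ x))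
          ≤ deriv μ (x ⬝ᵥ θ) * d := mul_le_mul_of_nonneg_left hb hc0.le
      have h2 : deriv μ (x ⬝ᵥ θ) * d ≤ 1 / 4 * d :=
        mul_le_mul_of_nonneg_right hc4 hdn
      nlinarith [h1, h2]
end
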